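/- Let 0 < x ≤ 1, r ≥ 0, and 0 ≤ v ≤ 1. Then G_{r,v}(x) ≤ r x^v + (1-r)((1-v) + v x) ≤ g_{r,v}(x), where g_{r,v}(x) = v(x-1)(r((1+x)/2)^(v-1) + (1-r)) + 1 and G_{r,v}(x) = (v(x-1)/2)(r x^(v-1) + 2 - r) + 1. -/

import Mathlib

open Real Set

/-- Lower scalar inequality: trapezoid-type bound for `x ^ v`. -/
lemma heron_aux_lower (x v : ℝ) (hx0 : 0 < x) (hx1 : x ≤ 1) (hv0 : 0 ≤ v) (hv1 : v ≤ 1) :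
    1 + v * ((x - 1) * (x ^ (v - 1) + 1)) / 2 ≤ x ^ v := by
  set F : ℝ → ℝ := fun t => t ^ v - v * ((t - 1) * (t ^ (v - 1) + 1)) / 2 with hF
  have hder : ∀ t : ℝ, 0 < t → HasDerivAt F
      (v * t ^ (v - 1) -
        v * (1 * (t ^ (v - 1) + 1) + (t - 1) * ((v - 1) * t ^ (v - 1 - 1))) / 2) t := by
    intro t ht
    have h1 : HasDerivAt (fun s : ℝ => s ^ v) (v * t ^ (v - 1)) t :=
      Real.hasDerivAt_rpow_const (Or.inl ht.ne')
    have h2 : HasDerivAt (fun s : ℝ => s ^ (v - 1)) ((v - 1) * t ^ (v - 1 - 1)) t :=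
      Real.hasDerivAt_rpow_const (Or.inl ht.ne')
    have h3 : HasDerivAt (fun s : ℝ => s - 1) 1 t := (hasDerivAt_id t).sub_const 1
    have h4 := h3.mul (h2.add_const 1)
    exact h1.sub ((h4.const_mul v).div_const 2)
  have hanti : AntitoneOn F (Set.Icc x 1) := by
    apply antitoneOn_of_deriv_nonpos (convex_Icc x 1)
    · intro t ht
      exact (hder t (lt_of_lt_of_le hx0 ht.1)).continuousAt.continuousWithinAt
    · intro t ht
      rw [interior_Icc] at ht
      exact (hder t (hx0.trans ht.1)).differentiableAt.differentiableWithinAt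
    · intro t ht
      rw [interior_Icc] at ht
      obtain ⟨ht0, ht1⟩ := ht
      have htp : 0 < t := hx0.trans ht0
      rw [(hder t htp).deriv]
      have hC : (0:ℝ) < t ^ (2 - v) := Real.rpow_pos_of_pos htp _
      have hAC : t ^ (v - 1) * t ^ (2 - v) = t := by
        rw [← Real.rpow_add htp]
        norm_num
      have hBC : t ^ (v - 1 - 1) * t ^ (2 - v) = 1 := by
        rw [← Real.rpow_add htp, show v - 1 - 1 + (2 - v) = (0:ℝ) by ring, Real.rpow_zero]
      have hbern : 1 + (2 - v) * (t - 1) ≤ t ^ (2 - v) := by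
        have h := one_add_mul_self_le_rpow_one_add (s := t - 1) (by linarith) (p := 2 - v)
          (by linarith)
        rwa [show (1:ℝ) + (t - 1) = t by ring] at h
      have heq : (t ^ (v - 1) - 1 - (1 - v) * (1 - t) * t ^ (v - 1 - 1)) * t ^ (2 - v)
          = t - t ^ (2 - v) - (1 - v) * (1 - t) := by
        linear_combination hAC - (1 - v) * (1 - t) * hBC
      have h2 : (t ^ (v - 1) - 1 - (1 - v) * (1 - t) * t ^ (v - 1 - 1)) * t ^ (2 - v) ≤ 0 := by
        rw [heq]; nlinarith [hbern]
      have hbr : t ^ (v - 1) - 1 - (1 - v) * (1 - t) * t ^ (v - 1 - 1) ≤ 0 := by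
        nlinarith [hC, h2]
      nlinarith [mul_nonneg hv0 (neg_nonneg.2 hbr)]
  have h10 := hanti (Set.left_mem_Icc.2 hx1) (Set.right_mem_Icc.2 hx1) hx1
  have hF1 : F 1 = 1 := by simp [hF]
  have hFx : F x = x ^ v - v * ((x - 1) * (x ^ (v - 1) + 1)) / 2 := rfl
  rw [hF1, hFx] at h10
  linarith

/-- Upper scalar inequality: midpoint-type bound for `x ^ v`. -/
lemma heron_aux_upper (x v : ℝ) (hx0 : 0 < x) (hx1 : x ≤ 1) (hv0 : 0 ≤ v) (hv1 : v ≤ 1) :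
    x ^ v ≤ 1 + v * ((x - 1) * ((1 + x) / 2) ^ (v - 1)) := by
  set G : ℝ → ℝ := fun t => 1 + v * ((t - 1) * ((1 + t) / 2) ^ (v - 1)) - t ^ v with hG
  have hder : ∀ t : ℝ, 0 < t → HasDerivAt G
      (v * (1 * ((1 + t) / 2) ^ (v - 1)
          + (t - 1) * ((v - 1) * ((1 + t) / 2) ^ (v - 1 - 1) * (1 / 2)))
        - v * t ^ (v - 1)) t := by
    intro t ht
    have hm0 : (0:ℝ) < (1 + t) / 2 := by linarith
    have h1 : HasDerivAt (fun s : ℝ => s ^ v) (v * t ^ (v - 1)) t :=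
      Real.hasDerivAt_rpow_const (Or.inl ht.ne')
    have hu : HasDerivAt (fun s : ℝ => (1 + s) / 2) (1 / 2) t := by
      simpa using ((hasDerivAt_id t).const_add 1).div_const 2
    have hrp := hu.rpow_const (p := v - 1) (Or.inl hm0.ne')
    have h3 : HasDerivAt (fun s : ℝ => s - 1) 1 t := (hasDerivAt_id t).sub_const 1
    have h4 := (h3.mul hrp).const_mul v
    have h5 := (h4.const_add 1).sub h1
    exact h5.congr_deriv (by ring)
  have hanti : AntitoneOn G (Set.Icc x 1) := by
    apply antitoneOn_of_deriv_nonpos (convex_Icc x 1)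
    · intro t ht
      exact (hder t (lt_of_lt_of_le hx0 ht.1)).continuousAt.continuousWithinAt
    · intro t ht
      rw [interior_Icc] at ht
      exact (hder t (hx0.trans ht.1)).differentiableAt.differentiableWithinAt
    · intro t ht
      rw [interior_Icc] at ht
      obtain ⟨ht0, ht1⟩ := ht
      have htp : 0 < t := hx0.trans ht0
      rw [(hder t htp).deriv]
      have hm0 : (0:ℝ) < (1 + t) / 2 := by linarith
      have hP : (0:ℝ) < t ^ v := Real.rpow_pos_of_pos htp _
      have hQ : (0:ℝ) < ((1 + t) / 2) ^ v := Real.rpow_pos_of_pos hm0 _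
      have hA2 : ((1 + t) / 2) ^ (v - 1) * ((1 + t) / 2) = ((1 + t) / 2) ^ v := by
        rw [← Real.rpow_add_one hm0.ne']
        norm_num
      have hA3 : ((1 + t) / 2) ^ (v - 1 - 1) * ((1 + t) / 2) = ((1 + t) / 2) ^ (v - 1) := by
        rw [← Real.rpow_add_one hm0.ne']
        norm_num
      have hA1 : t ^ (v - 1) * t = t ^ v := by
        rw [← Real.rpow_add_one htp.ne']
        norm_num
      -- Bernoulli with exponent v at the point ((1+t)/2)/t ≥ 1
      have hber0 : (((1 + t) / 2) / t) ^ v ≤ 1 + v * (((1 + t) / 2) / t - 1) := by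
        have h := rpow_one_add_le_one_add_mul_self (s := ((1 + t) / 2) / t - 1)
          (by nlinarith [div_pos hm0 htp]) hv0 hv1
        rwa [show (1:ℝ) + (((1 + t) / 2) / t - 1) = ((1 + t) / 2) / t by ring] at h
      have hdiv : (((1 + t) / 2) / t) ^ v = ((1 + t) / 2) ^ v / t ^ v :=
        Real.div_rpow hm0.le htp.le v
      rw [hdiv] at hber0
      have hber2 : ((1 + t) / 2) ^ v * t ≤ (t + v * ((1 + t) / 2 - t)) * t ^ v := by
        have h := mul_le_mul_of_nonneg_right hber0 (mul_pos hP htp).le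
        calc ((1 + t) / 2) ^ v * t = ((1 + t) / 2) ^ v / t ^ v * (t ^ v * t) := by
              field_simp
          _ ≤ (1 + v * (((1 + t) / 2) / t - 1)) * (t ^ v * t) := h
          _ = (t + v * ((1 + t) / 2 - t)) * t ^ v := by
              field_simp
      have hd0 : (0:ℝ) ≤ (1 + t) / 2 + (1 - v) * ((1 + t) / 2 - t) := by nlinarith
      have h7 := mul_le_mul_of_nonneg_right hber2 hd0
      have h8 : (0:ℝ) ≤ t ^ v * ((1 - v) * ((1 + t) / 2 - t)) ^ 2 := by positivity
      have h10 : ((1 + t) / 2) ^ v * t * ((1 + t) / 2 + (1 - v) * ((1 + t) / 2 - t))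
          ≤ t ^ v * ((1 + t) / 2) * ((1 + t) / 2) := by nlinarith [h7, h8]
      have hkey : ((1 + t) / 2) ^ (v - 1)
            + (1 - t) * (1 - v) * ((1 + t) / 2) ^ (v - 1 - 1) / 2 ≤ t ^ (v - 1) := by
        have heq : (((1 + t) / 2) ^ (v - 1)
              + (1 - t) * (1 - v) * ((1 + t) / 2) ^ (v - 1 - 1) / 2)
              * (t * ((1 + t) / 2) * ((1 + t) / 2))
            = ((1 + t) / 2) ^ v * t * ((1 + t) / 2 + (1 - v) * ((1 + t) / 2 - t)) := by
          linear_combination (t * ((1 + t) / 2)) * hA2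
            + ((1 - t) * (1 - v) * t * ((1 + t) / 2) / 2) * hA3
            + ((1 - t) * (1 - v) * t / 2) * hA2
        have heq2 : t ^ (v - 1) * (t * ((1 + t) / 2) * ((1 + t) / 2))
            = t ^ v * ((1 + t) / 2) * ((1 + t) / 2) := by
          linear_combination (((1 + t) / 2) * ((1 + t) / 2)) * hA1
        have hpos : (0:ℝ) < t * ((1 + t) / 2) * ((1 + t) / 2) := by positivity
        have := h10
        rw [← heq, ← heq2] at this
        exact le_of_mul_le_mul_right this hpos
      nlinarith [mul_le_mul_of_nonneg_left hkey hv0]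
  have h10 := hanti (Set.left_mem_Icc.2 hx1) (Set.right_mem_Icc.2 hx1) hx1
  have hG1 : G 1 = 0 := by
    have : ((1:ℝ) + 1) / 2 = 1 := by norm_num
    simp [hG, this]
  have hGx : G x = 1 + v * ((x - 1) * ((1 + x) / 2) ^ (v - 1)) - x ^ v := rfl
  rw [hG1, hGx] at h10
  linarith

theorem heron_bounds_le_one (x r v : ℝ) (hx0 : 0 < x) (hx1 : x ≤ 1) (hr : 0 ≤ r)
    (hv0 : 0 ≤ v) (hv1 : v ≤ 1) :
    v * (x - 1) / 2 * (r * x ^ (v - 1) + 2 - r) + 1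
      ≤ r * x ^ v + (1 - r) * ((1 - v) + v * x) ∧
    r * x ^ v + (1 - r) * ((1 - v) + v * x)
      ≤ v * (x - 1) * (r * ((1 + x) / 2) ^ (v - 1) + (1 - r)) + 1 := by
  have hA := heron_aux_lower x v hx0 hx1 hv0 hv1
  have hB := heron_aux_upper x v hx0 hx1 hv0 hv1
  constructor
  · nlinarith [mul_nonneg hr (sub_nonneg.2 hA)]
  · nlinarith [mul_nonneg hr (sub_nonneg.2 hB)]
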